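/- Let F be a field and A, B ∈ F^{2×2}. The commutator [A,B] = AB − BA is invertible if and only if both of the following hold: (i) A and B are cyclic, and (ii) for every left eigenvector u of A and every right eigenvector v of B (over an extension field of F containing the eigenvalues of A and B), uv ≠ 0. -/

import Mathlib

open Matrix Polynomial

/-- In a 2-dimensional space, the orthogonal complement of a nonzero vector is
one-dimensional: if `u ⬝ v = 0` and `u ⬝ x = 0` with `u, v ≠ 0`, then `x` is a
multiple of `v`. -/
lemma span2 {E : Type*} [Field E] {u v x : Fin 2 → E}
    (hu : u ≠ 0) (hv : v ≠ 0) (huv : u ⬝ᵥ v = 0) (hux : u ⬝ᵥ x = 0) :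
    ∃ t : E, x = t • v := by
  rw [dotProduct, Fin.sum_univ_two] at huv hux
  have hucases : u 0 ≠ 0 ∨ u 1 ≠ 0 := by
    by_contra h
    push_neg at h
    exact hu (funext fun i => by fin_cases i <;> simp [h.1, h.2])
  rcases hucases with h | h
  · have hv1 : v 1 ≠ 0 := by
      intro h1
      apply hv
      have hv0 : v 0 = 0 := by
        have : u 0 * v 0 = 0 := by linear_combination huv - u 1 * h1
        exact (mul_eq_zero.mp this).resolve_left h
      exact funext fun i => by fin_cases i <;> simp [hv0, h1]
    refine ⟨x 1 / v 1, funext fun i => ?_⟩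
    fin_cases i
    · have key : u 0 * (x 0 * v 1) = u 0 * (x 1 * v 0) := by
        linear_combination v 1 * hux - x 1 * huv
      have h2 := mul_left_cancel₀ h key
      show x 0 = (x 1 / v 1) * v 0
      field_simp
      linear_combination h2
    · show x 1 = (x 1 / v 1) * v 1
      field_simp
  · have hv0 : v 0 ≠ 0 := by
      intro h0
      apply hv
      have hv1 : v 1 = 0 := by
        have : u 1 * v 1 = 0 := by rw [h0] at huv; linear_combination huv
        exact (mul_eq_zero.mp this).resolve_left h
      exact funext fun i => by fin_cases i <;> simp [h0, hv1]
    refine ⟨x 0 / v 0, funext fun i => ?_⟩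
    fin_cases i
    · show x 0 = (x 0 / v 0) * v 0
      field_simp
    · have key : u 1 * (x 1 * v 0) = u 1 * (x 0 * v 1) := by
        linear_combination v 0 * hux - x 0 * huv
      have h2 := mul_left_cancel₀ h key
      show x 1 = (x 0 / v 0) * v 1
      field_simp
      linear_combination h2

/-- The kernel of a nonzero 2×2 matrix is at most one-dimensional. -/
lemma ker1 {E : Type*} [Field E] {M : Matrix (Fin 2) (Fin 2) E} {v x : Fin 2 → E}
    (hM : M ≠ 0) (hv : v ≠ 0) (h1 : M *ᵥ v = 0) (h2 : M *ᵥ x = 0) :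
    ∃ t : E, x = t • v := by
  obtain ⟨i, hi⟩ : ∃ i, M i ≠ 0 := by
    by_contra h
    push_neg at h
    exact hM (by ext i j; simpa using congrFun (h i) j)
  have e1 : M i ⬝ᵥ v = 0 := by
    have := congrFun h1 i
    simpa [Matrix.mulVec] using this
  have e2 : M i ⬝ᵥ x = 0 := by
    have := congrFun h2 i
    simpa [Matrix.mulVec] using this
  exact span2 hi hv e1 e2

/-- Cayley–Hamilton for 2×2 matrices, by direct computation. -/
lemma ch2 {R : Type*} [CommRing R] (B : Matrix (Fin 2) (Fin 2) R) :
    B * B = B.trace • B - B.det • (1 : Matrix (Fin 2) (Fin 2) R) := by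
  ext i j
  fin_cases i <;> fin_cases j <;>
    simp [Matrix.mul_apply, Fin.sum_univ_two, Matrix.trace_fin_two,
      Matrix.det_fin_two, Matrix.one_apply] <;> ring

/-- If `A` and `B` are nonscalar 2×2 matrices over an algebraically closed field
whose commutator is singular, then they have a common (right) eigenvector. -/
lemma commonEigen {E : Type*} [Field E] [IsAlgClosed E] {A B : Matrix (Fin 2) (Fin 2) E}
    (hA : ∀ c : E, A ≠ c • 1) (hB : ∀ c : E, B ≠ c • 1)
    (hdet : (A * B - B * A).det = 0) :
    ∃ (v : Fin 2 → E) (α β : E), v ≠ 0 ∧ A *ᵥ v = α • v ∧ B *ᵥ v = β • v := by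
  -- common step: an eigenvector of B on which AB and BA agree is a common eigenvector
  have step : ∀ (v : Fin 2 → E) (β : E), v ≠ 0 → B *ᵥ v = β • v →
      (A * B) *ᵥ v = (B * A) *ᵥ v → ∃ α : E, A *ᵥ v = α • v := by
    intro v β hv hBv hc
    have hM : B - β • 1 ≠ 0 := by
      intro h
      exact hB β (by rwa [sub_eq_zero] at h)
    have h1 : (B - β • 1) *ᵥ v = 0 := by
      rw [Matrix.sub_mulVec, Matrix.smul_mulVec, Matrix.one_mulVec, hBv, sub_self]
    have h2 : (B - β • 1) *ᵥ (A *ᵥ v) = 0 := by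
      rw [Matrix.sub_mulVec, Matrix.smul_mulVec, Matrix.one_mulVec,
        Matrix.mulVec_mulVec, ← hc, ← Matrix.mulVec_mulVec, hBv, Matrix.mulVec_smul,
        sub_self]
    exact ker1 hM hv h1 h2
  obtain ⟨v, hv, hCv⟩ := Matrix.exists_mulVec_eq_zero_iff.mpr hdet
  have hCv' : (A * B) *ᵥ v = (B * A) *ᵥ v := by
    rw [Matrix.sub_mulVec] at hCv
    exact sub_eq_zero.mp hCv
  by_cases hBv : ∃ β : E, B *ᵥ v = β • v
  · obtain ⟨β, hβ⟩ := hBv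
    obtain ⟨α, hα⟩ := step v β hv hβ hCv'
    exact ⟨v, α, β, hv, hα, hβ⟩
  · push_neg at hBv
    -- in this case the commutator vanishes identically
    have hCBv : (A * B - B * A) *ᵥ (B *ᵥ v) = 0 := by
      have hBB := ch2 B
      have p1 : (A * B) *ᵥ (B *ᵥ v)
          = B.trace • ((B * A) *ᵥ v) - B.det • (A *ᵥ v) := by
        rw [Matrix.mulVec_mulVec, mul_assoc, hBB, mul_sub, Matrix.sub_mulVec,
          mul_smul_comm, mul_smul_comm, mul_one, Matrix.smul_mulVec,
          Matrix.smul_mulVec, hCv']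
      have q1 : A *ᵥ (B *ᵥ v) = B *ᵥ (A *ᵥ v) := by
        rw [Matrix.mulVec_mulVec, Matrix.mulVec_mulVec, hCv']
      have p2 : (B * A) *ᵥ (B *ᵥ v)
          = B.trace • ((B * A) *ᵥ v) - B.det • (A *ᵥ v) := by
        calc (B * A) *ᵥ (B *ᵥ v) = B *ᵥ (A *ᵥ (B *ᵥ v)) := by
              rw [Matrix.mulVec_mulVec, Matrix.mulVec_mulVec,
                Matrix.mulVec_mulVec, mul_assoc]
          _ = (B * B) *ᵥ (A *ᵥ v) := by rw [q1, Matrix.mulVec_mulVec]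
          _ = B.trace • ((B * A) *ᵥ v) - B.det • (A *ᵥ v) := by
              rw [hBB, Matrix.sub_mulVec, Matrix.smul_mulVec,
                Matrix.smul_mulVec, Matrix.one_mulVec, Matrix.mulVec_mulVec]
      rw [Matrix.sub_mulVec, p1, p2, sub_self]
    have hC0 : A * B - B * A = 0 := by
      by_contra hC
      obtain ⟨i, hi⟩ : ∃ i, (A * B - B * A) i ≠ 0 := by
        by_contra h
        push_neg at h
        exact hC (by ext i j; simpa using congrFun (h i) j)
      have e1 : (A * B - B * A) i ⬝ᵥ v = 0 := by
        have := congrFun hCv i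
        simpa [Matrix.mulVec] using this
      have e2 : (A * B - B * A) i ⬝ᵥ (B *ᵥ v) = 0 := by
        have := congrFun hCBv i
        exact this
      obtain ⟨t, ht⟩ := span2 hi hv e1 e2
      exact hBv t ht
    have hcomm : (A * B) = B * A := by rwa [sub_eq_zero] at hC0
    obtain ⟨μ, hμ⟩ := Module.End.exists_eigenvalue (Matrix.toLin' B)
    obtain ⟨w, hw⟩ := hμ.exists_hasEigenvector
    have hw0 : w ≠ 0 := hw.right
    have hBw : B *ᵥ w = μ • w := by
      have := hw.apply_eq_smul
      simpa [Matrix.toLin'_apply] using this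
    obtain ⟨α, hα⟩ := step w μ hw0 hBw (by rw [hcomm])
    exact ⟨w, α, μ, hw0, hα, hBw⟩

/-- A 2×2 matrix whose minimal polynomial differs from its characteristic
polynomial is scalar. -/
lemma scalar_of_minpoly_ne {F : Type*} [Field F] {A : Matrix (Fin 2) (Fin 2) F}
    (h : minpoly F A ≠ A.charpoly) : ∃ c : F, A = c • 1 := by
  have hint : IsIntegral F A := IsIntegral.of_finite F A
  have hmon := minpoly.monic hint
  have hdvd := Matrix.minpoly_dvd_charpoly A
  have hcd : A.charpoly.natDegree = 2 := by
    simp [Matrix.charpoly_natDegree_eq_dim]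
  have hcm := Matrix.charpoly_monic A
  have hne2 : (minpoly F A).natDegree ≠ 2 := by
    intro h2
    obtain ⟨q, hq⟩ := hdvd
    have hq0 : q ≠ 0 := by
      intro h0
      rw [h0, mul_zero] at hq
      exact hcm.ne_zero hq
    have hdq : q.natDegree = 0 := by
      have := Polynomial.natDegree_mul hmon.ne_zero hq0
      rw [← hq, hcd, h2] at this
      omega
    obtain ⟨a, ha⟩ := Polynomial.natDegree_eq_zero.mp hdq
    have hlc : A.charpoly.leadingCoeff = (minpoly F A).leadingCoeff * q.leadingCoeff :=
      by rw [hq, Polynomial.leadingCoeff_mul]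
    rw [hcm.leadingCoeff, hmon.leadingCoeff, one_mul, ← ha,
      Polynomial.leadingCoeff_C] at hlc
    apply h
    rw [hq, ← ha, ← hlc, Polynomial.C_1, mul_one]
  have hpos : 0 < (minpoly F A).natDegree := minpoly.natDegree_pos hint
  have hle : (minpoly F A).natDegree ≤ 2 := by
    have := Polynomial.natDegree_le_of_dvd hdvd hcm.ne_zero
    rwa [hcd] at this
  have h1 : (minpoly F A).natDegree = 1 := by omega
  have heq := Polynomial.eq_X_add_C_of_natDegree_le_one (le_of_eq h1)
  have hc1 : (minpoly F A).coeff 1 = 1 := by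
    have := hmon.coeff_natDegree
    rwa [h1] at this
  rw [hc1, Polynomial.C_1, one_mul] at heq
  have haev := minpoly.aeval F A
  rw [heq] at haev
  simp only [map_add, aeval_X, aeval_C] at haev
  refine ⟨-((minpoly F A).coeff 0), ?_⟩
  have : algebraMap F (Matrix (Fin 2) (Fin 2) F) ((minpoly F A).coeff 0)
      = ((minpoly F A).coeff 0) • 1 := Algebra.algebraMap_eq_smul_one _
  rw [this] at haev
  rw [neg_smul]
  exact eq_neg_of_add_eq_zero_left haev

/-- A scalar 2×2 matrix has minimal polynomial of degree ≤ 1, hence distinct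
from its characteristic polynomial. -/
lemma minpoly_ne_of_scalar {F : Type*} [Field F] (c : F) :
    minpoly F ((c • 1 : Matrix (Fin 2) (Fin 2) F)) ≠ (c • 1 : Matrix (Fin 2) (Fin 2) F).charpoly := by
  intro h
  have hdeg : (minpoly F (c • 1 : Matrix (Fin 2) (Fin 2) F)).degree ≤ (X - C c : F[X]).degree := by
    apply minpoly.min
    · exact Polynomial.monic_X_sub_C c
    · simp [map_sub, aeval_X, aeval_C, Algebra.algebraMap_eq_smul_one]
  rw [h] at hdeg
  rw [Polynomial.degree_X_sub_C] at hdeg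
  have h2 : ((c • 1 : Matrix (Fin 2) (Fin 2) F)).charpoly.natDegree = 2 := by
    simp [Matrix.charpoly_natDegree_eq_dim]
  have h3 : ((c • 1 : Matrix (Fin 2) (Fin 2) F)).charpoly.degree = (2 : ℕ) := by
    rw [Polynomial.degree_eq_natDegree (Matrix.charpoly_monic _).ne_zero, h2]
  rw [h3] at hdeg
  norm_num at hdeg

/-- If the image of a 2×2 matrix under a field embedding is scalar, the matrix
itself is scalar. -/
lemma map_scalar_down {F E : Type*} [Field F] [Field E] (f : F →+* E)
    (A : Matrix (Fin 2) (Fin 2) F) (c : E) (h : A.map f = c • 1) :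
    A = (A 0 0) • 1 := by
  have key : ∀ i j, f (A i j) = c * (1 : Matrix (Fin 2) (Fin 2) E) i j := by
    intro i j
    have := congrFun (congrFun h i) j
    simpa [Matrix.map_apply, Matrix.smul_apply] using this
  have h01 : A 0 1 = 0 := by
    apply f.injective
    have := key 0 1
    simp [Matrix.one_apply] at this
    simpa using this
  have h10 : A 1 0 = 0 := by
    apply f.injective
    have := key 1 0
    simp [Matrix.one_apply] at this
    simpa using this
  have h11 : A 1 1 = A 0 0 := by
    apply f.injective
    have e0 := key 0 0
    have e1 := key 1 1
    simp [Matrix.one_apply] at e0 e1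
    rw [e0, e1]
  ext i j
  fin_cases i <;> fin_cases j <;>
    simp [Matrix.smul_apply, Matrix.one_apply, h01, h10, h11]

theorem commutator_isUnit_iff
    {F : Type*} [Field F]
    (A B : Matrix (Fin 2) (Fin 2) F) :
    IsUnit (A * B - B * A) ↔
      ((minpoly F A = A.charpoly ∧ minpoly F B = B.charpoly) ∧
        ∀ (u : Fin 2 → AlgebraicClosure F) (α : AlgebraicClosure F)
          (v : Fin 2 → AlgebraicClosure F) (β : AlgebraicClosure F),
          u ≠ 0 → Matrix.vecMul u (A.map (algebraMap F (AlgebraicClosure F))) = α • u →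
          v ≠ 0 → Matrix.mulVec (B.map (algebraMap F (AlgebraicClosure F))) v = β • v →
          dotProduct u v ≠ 0) := by
  set E := AlgebraicClosure F
  set f := algebraMap F E with hf
  have mapeq : (A * B - B * A).map f
      = A.map f * B.map f - B.map f * A.map f := by
    have : (A * B - B * A).map f = f.mapMatrix (A * B - B * A) := rfl
    rw [this, map_sub, _root_.map_mul, _root_.map_mul]
    rfl
  have detmap : ((A * B - B * A).map f).det = f ((A * B - B * A).det) :=
    (RingHom.map_det f _).symm
  have unit_iff : IsUnit (A * B - B * A) ↔
      (A.map f * B.map f - B.map f * A.map f).det ≠ 0 := by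
    rw [Matrix.isUnit_iff_isUnit_det, isUnit_iff_ne_zero, ← mapeq, detmap]
    constructor
    · intro h h0
      exact h (by simpa using f.injective (by simpa using h0))
    · intro h h0
      exact h (by rw [h0, map_zero])
  constructor
  · intro hU
    have hAs : minpoly F A = A.charpoly := by
      by_contra hne
      obtain ⟨c, hc⟩ := scalar_of_minpoly_ne hne
      rw [hc] at hU
      have : (c • 1 : Matrix (Fin 2) (Fin 2) F) * B - B * (c • 1) = 0 := by
        rw [smul_mul_assoc, one_mul, mul_smul_comm, mul_one, sub_self]
      rw [this] at hU
      exact not_isUnit_zero hU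
    have hBs : minpoly F B = B.charpoly := by
      by_contra hne
      obtain ⟨c, hc⟩ := scalar_of_minpoly_ne hne
      rw [hc] at hU
      have : A * (c • 1 : Matrix (Fin 2) (Fin 2) F) - (c • 1) * A = 0 := by
        rw [smul_mul_assoc, one_mul, mul_smul_comm, mul_one, sub_self]
      rw [this] at hU
      exact not_isUnit_zero hU
    refine ⟨⟨hAs, hBs⟩, ?_⟩
    intro u α v β hu huA hv hBv huv
    have h1 : u ⬝ᵥ ((A.map f) *ᵥ v) = 0 := by
      rw [Matrix.dotProduct_mulVec, huA, smul_dotProduct, huv, smul_zero]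
    obtain ⟨t, ht⟩ := span2 hu hv huv h1
    have hker : (A.map f * B.map f - B.map f * A.map f) *ᵥ v = 0 := by
      rw [Matrix.sub_mulVec, ← Matrix.mulVec_mulVec, ← Matrix.mulVec_mulVec,
        hBv, ht, Matrix.mulVec_smul, Matrix.mulVec_smul, ht, hBv,
        smul_comm, sub_self]
    have hdet0 : (A.map f * B.map f - B.map f * A.map f).det = 0 :=
      Matrix.exists_mulVec_eq_zero_iff.mp ⟨v, hv, hker⟩
    exact (unit_iff.mp hU) hdet0
  · rintro ⟨⟨hmA, hmB⟩, hpair⟩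
    rw [unit_iff]
    intro hdet0
    have hA' : ∀ c : E, A.map f ≠ c • 1 := by
      intro c hc
      have hsc := map_scalar_down f A c hc
      rw [hsc] at hmA
      exact minpoly_ne_of_scalar (A 0 0) hmA
    have hB' : ∀ c : E, B.map f ≠ c • 1 := by
      intro c hc
      have hsc := map_scalar_down f B c hc
      rw [hsc] at hmB
      exact minpoly_ne_of_scalar (B 0 0) hmB
    obtain ⟨v, α, β, hv, hAv, hBv⟩ := commonEigen hA' hB' hdet0
    set u : Fin 2 → E := ![v 1, -v 0] with hu_def
    have hu : u ≠ 0 := by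
      intro h
      apply hv
      have h0 := congrFun h 0
      have h1 := congrFun h 1
      simp [hu_def] at h0 h1
      exact funext fun i => by fin_cases i <;> simp [h0, h1]
    have huv : u ⬝ᵥ v = 0 := by
      simp [hu_def, dotProduct, Fin.sum_univ_two]
      ring
    have hvu : v ⬝ᵥ u = 0 := by rwa [dotProduct_comm]
    have h1 : v ⬝ᵥ (u ᵥ* (A.map f)) = 0 := by
      rw [dotProduct_comm, ← Matrix.dotProduct_mulVec, hAv,
        dotProduct_smul, huv, smul_zero]
    obtain ⟨t, ht⟩ := span2 hv hu hvu h1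
    exact hpair u t v β hu ht hv hBv huv
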